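/- The reduction axiom for box under arrow updates is valid: [U,o]□_a φ ↔ ⋀_{(o,ψ)→_a(o',ψ')} (ψ → □_a(ψ' → [U,o']φ)), where the conjunction ranges over all a-arrows in U with source o. -/

import Mathlib

namespace AAUML

/-- Formulas of arbitrary arrow update model logic over atoms `P` and agents `A`.
An arrow update model is encoded as a finite list of arrows
`(agent, source outcome, source condition, target outcome, target condition)`,
with outcomes drawn from `ℕ`; `upd U o φ` is `[U,o]φ` and `all φ` is `[↑]φ`. -/
inductive Form (P A : Type) : Type where
  | atom : P → Form P A
  | neg  : Form P A → Form P A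
  | and  : Form P A → Form P A → Form P A
  | box  : A → Form P A → Form P A
  | upd  : List (A × ℕ × Form P A × ℕ × Form P A) → ℕ → Form P A → Form P A
  | all  : Form P A → Form P A

/-- An arrow: agent, source outcome, source condition, target outcome, target condition. -/
abbrev Arrow (P A : Type) := A × ℕ × Form P A × ℕ × Form P A

/-- Formulas of basic multi-agent modal logic: no update modality, no quantifier. -/
inductive Form.Modal {P A : Type} : Form P A → Prop
  | atom (p : P) : Form.Modal (.atom p)
  | neg {φ : Form P A} : Form.Modal φ → Form.Modal (.neg φ)
  | and {φ ψ : Form P A} : Form.Modal φ → Form.Modal ψ → Form.Modal (.and φ ψ)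
  | box (a : A) {φ : Form P A} : Form.Modal φ → Form.Modal (.box a φ)

/-- Formulas of arrow update model logic (no arbitrary-update quantifier anywhere,
including inside the conditions of arrow update models). -/
inductive Form.NoQuant {P A : Type} : Form P A → Prop
  | atom (p : P) : Form.NoQuant (.atom p)
  | neg {φ : Form P A} : Form.NoQuant φ → Form.NoQuant (.neg φ)
  | and {φ ψ : Form P A} : Form.NoQuant φ → Form.NoQuant ψ → Form.NoQuant (.and φ ψ)
  | box (a : A) {φ : Form P A} : Form.NoQuant φ → Form.NoQuant (.box a φ)
  | upd {U : List (Arrow P A)} (o : ℕ) {φ : Form P A} : Form.NoQuant φ →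
      (∀ ar ∈ U, Form.NoQuant ar.2.2.1) → (∀ ar ∈ U, Form.NoQuant ar.2.2.2.2) →
      Form.NoQuant (.upd U o φ)

/-- Propositional formulas (no modalities at all). -/
inductive Form.Prp {P A : Type} : Form P A → Prop
  | atom (p : P) : Form.Prp (.atom p)
  | neg {φ : Form P A} : Form.Prp φ → Form.Prp (.neg φ)
  | and {φ ψ : Form P A} : Form.Prp φ → Form.Prp ψ → Form.Prp (.and φ ψ)

/-- A relational (Kripke) model. -/
structure KModel (P A : Type) : Type 1 where
  World : Type
  R : A → World → World → Prop
  V : World → P → Prop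

variable {P A : Type}

/-- Satisfaction for basic modal formulas (junk value `False` on updates/quantifiers;
only used on modal formulas). -/
def msat (M : KModel P A) : M.World → Form P A → Prop
  | s, .atom p => M.V s p
  | s, .neg φ => ¬ msat M s φ
  | s, .and φ ψ => msat M s φ ∧ msat M s ψ
  | s, .box a φ => ∀ t, M.R a s t → msat M t φ
  | _, .upd _ _ _ => False
  | _, .all _ => False

/-- Some arrow of `U` for agent `a` from outcome `o` to outcome `o'` has its (modal)
source condition true at `s` and its target condition true at `s'`. -/
def marrowOK (M : KModel P A) (U : List (Arrow P A)) (a : A) (o o' : ℕ)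
    (s s' : M.World) : Prop :=
  ∃ ψ ψ', (a, o, ψ, o', ψ') ∈ U ∧ msat M s ψ ∧ msat M s' ψ'

/-- All source and target conditions of `U` are basic modal formulas. -/
def ModalArrows (U : List (Arrow P A)) : Prop :=
  ∀ ar ∈ U, Form.Modal ar.2.2.1 ∧ Form.Modal ar.2.2.2.2

mutual
  /-- Satisfaction `M,s ⊨ φ`.  The case `upd U o φ` is interpreted in the product
  model `M*U` (inlined); `all φ` quantifies over all arrow update models with basic
  modal source and target conditions. -/
  def Form.sat : (M : KModel P A) → M.World → Form P A → Prop
    | M, s, .atom p => M.V s p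
    | M, s, .neg φ => ¬ Form.sat M s φ
    | M, s, .and φ ψ => Form.sat M s φ ∧ Form.sat M s ψ
    | M, s, .box a φ => ∀ t, M.R a s t → Form.sat M t φ
    | M, s, .upd U o φ =>
        Form.sat ⟨M.World × ℕ,
          fun a x y => M.R a x.1 y.1 ∧ satList M U a x.2 y.2 x.1 y.1,
          fun x p => M.V x.1 p⟩ (s, o) φ
    | M, s, .all φ => ∀ (U : List (Arrow P A)) (o : ℕ), ModalArrows U →
        Form.sat ⟨M.World × ℕ,
          fun a x y => M.R a x.1 y.1 ∧ marrowOK M U a x.2 y.2 x.1 y.1,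
          fun x p => M.V x.1 p⟩ (s, o) φ
  termination_by M s φ => sizeOf φ

  /-- Some arrow of the list, for agent `a`, from `o` to `o'`, has its source condition
  true at `s` and its target condition true at `s'`. -/
  def satList : (M : KModel P A) → List (Arrow P A) → A → ℕ → ℕ → M.World → M.World → Prop
    | _, [], _, _, _, _, _ => False
    | M, (b, o1, ψ, o2, ψ') :: rest, a, o, o', s, s' =>
        (b = a ∧ o1 = o ∧ o2 = o' ∧ Form.sat M s ψ ∧ Form.sat M s' ψ') ∨
        satList M rest a o o' s s'
  termination_by M U a o o' s s' => sizeOf U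
end

/-- The product `M*U` of a relational model and an arrow update model. -/
def prodModel (M : KModel P A) (U : List (Arrow P A)) : KModel P A :=
  ⟨M.World × ℕ,
   fun a x y => M.R a x.1 y.1 ∧ satList M U a x.2 y.2 x.1 y.1,
   fun x p => M.V x.1 p⟩

def Valid (φ : Form P A) : Prop := ∀ (M : KModel P A) (s : M.World), Form.sat M s φ

def Form.or (φ ψ : Form P A) : Form P A := .neg (.and (.neg φ) (.neg ψ))
def Form.imp (φ ψ : Form P A) : Form P A := .neg (.and φ (.neg ψ))
def Form.dia (a : A) (φ : Form P A) : Form P A := .neg (.box a (.neg φ))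
/-- `⟨U,o⟩φ` -/
def Form.diaUpd (U : List (Arrow P A)) (o : ℕ) (φ : Form P A) : Form P A :=
  .neg (.upd U o (.neg φ))
/-- `⟨↑⟩φ` -/
def Form.ex (φ : Form P A) : Form P A := .neg (.all (.neg φ))
/-- A canonical tautology. -/
def Form.top [Inhabited P] : Form P A := .neg (.and (.atom default) (.neg (.atom default)))
/-- Finite conjunction. -/
def Form.conj [Inhabited P] : List (Form P A) → Form P A
  | [] => Form.top
  | φ :: rest => .and φ (Form.conj rest)

/-- `Z` is a bisimulation between `M` and `N`. -/
def IsBisim (M N : KModel P A) (Z : M.World → N.World → Prop) : Prop :=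
  ∀ s s', Z s s' →
    (∀ p, M.V s p ↔ N.V s' p) ∧
    (∀ a t, M.R a s t → ∃ t', N.R a s' t' ∧ Z t t') ∧
    (∀ a t', N.R a s' t' → ∃ t, M.R a s t ∧ Z t t')

/-- Bisimilarity of pointed models. -/
def Bisimilar (M : KModel P A) (s : M.World) (N : KModel P A) (s' : N.World) : Prop :=
  ∃ Z, IsBisim M N Z ∧ Z s s'

/-- An action model: actions with accessibility relations and preconditions. -/
structure AModel (P A : Type) : Type 1 where
  Action : Type
  rel : A → Action → Action → Prop
  pre : Action → Form P A

/-- The restricted modal product `M ⊗ E`. -/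
def actProd (M : KModel P A) (E : AModel P A) : KModel P A :=
  ⟨{x : M.World × E.Action // Form.sat M x.1 (E.pre x.2)},
   fun a x y => M.R a x.1.1 y.1.1 ∧ E.rel a x.1.2 y.1.2,
   fun x p => M.V x.1.1 p⟩

/-- `M,s ⊨ [E,e]φ`: if the precondition of `e` holds at `s` then `φ` holds at `(s,e)`
in `M ⊗ E`. -/
def actSat (M : KModel P A) (E : AModel P A) (s : M.World) (e : E.Action)
    (φ : Form P A) : Prop :=
  ∀ h : Form.sat M s (E.pre e), Form.sat (actProd M E) ⟨(s, e), h⟩ φ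



theorem satList_iff (M : KModel P A) (U : List (Arrow P A)) (a : A) (o o' : ℕ)
    (s t : M.World) :
    satList M U a o o' s t ↔
      ∃ ψ ψ', (a, o, ψ, o', ψ') ∈ U ∧ Form.sat M s ψ ∧ Form.sat M t ψ' := by
  induction U with
  | nil => simp [satList]
  | cons hd tl ih =>
    obtain ⟨b, o1, ψ0, o2, ψ0'⟩ := hd
    rw [satList, ih]
    constructor
    · rintro (⟨rfl, rfl, rfl, h1, h2⟩ | ⟨ψ, ψ', hm, h1, h2⟩)
      · exact ⟨ψ0, ψ0', List.mem_cons_self, h1, h2⟩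
      · exact ⟨ψ, ψ', List.mem_cons_of_mem _ hm, h1, h2⟩
    · rintro ⟨ψ, ψ', hm, h1, h2⟩
      rcases List.mem_cons.mp hm with heq | hm'
      · simp only [Prod.mk.injEq] at heq
        obtain ⟨rfl, rfl, rfl, rfl, rfl⟩ := heq
        exact Or.inl ⟨rfl, rfl, rfl, h1, h2⟩
      · exact Or.inr ⟨ψ, ψ', hm', h1, h2⟩

theorem sat_conj [Inhabited P] (M : KModel P A) (s : M.World) (L : List (Form P A)) :
    Form.sat M s (Form.conj L) ↔ ∀ χ ∈ L, Form.sat M s χ := by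
  induction L with
  | nil => simp [Form.conj, Form.top, Form.sat]
  | cons hd tl ih => simp [Form.conj, Form.sat, ih]

theorem sat_imp (M : KModel P A) (s : M.World) (φ ψ : Form P A) :
    Form.sat M s (Form.imp φ ψ) ↔ (Form.sat M s φ → Form.sat M s ψ) := by
  simp [Form.imp, Form.sat]

/-- the reduction axiom for box under arrow updates:
`[U,o]□_a φ ↔ ⋀_{(o,ψ)→_a(o',ψ')} (ψ → □_a(ψ' → [U,o']φ))` is valid, where the
conjunction ranges over all `a`-arrows of `U` with source outcome `o`. -/
theorem upd_box (P A : Type) [Inhabited P] [DecidableEq A]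
    (U : List (Arrow P A)) (o : ℕ) (a : A) (φ : Form P A) :
    ∀ (M : KModel P A) (s : M.World),
      Form.sat M s (.upd U o (.box a φ)) ↔
        Form.sat M s (Form.conj
          ((U.filter (fun ar => decide (ar.1 = a) && decide (ar.2.1 = o))).map
            (fun ar => Form.imp ar.2.2.1
              (Form.box a (Form.imp ar.2.2.2.2 (Form.upd U ar.2.2.2.1 φ)))))) := by
  intro M s
  rw [sat_conj]
  simp only [List.mem_map, List.mem_filter, Bool.and_eq_true, decide_eq_true_eq]
  constructor
  · rintro h χ ⟨⟨b, o1, ψ, o2, ψ'⟩, ⟨hmem, hb, ho⟩, rfl⟩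
    dsimp only at hb ho ⊢
    subst hb; subst ho
    rw [sat_imp]
    intro hψ
    rw [Form.sat]
    intro t hst
    rw [sat_imp]
    intro hψ'
    rw [Form.sat]
    rw [Form.sat, Form.sat] at h
    exact h (t, o2) ⟨hst, (satList_iff M U b o1 o2 s t).mpr ⟨ψ, ψ', hmem, hψ, hψ'⟩⟩
  · intro h
    rw [Form.sat, Form.sat]
    rintro ⟨t, o'⟩ ⟨hst, hsl⟩
    obtain ⟨ψ, ψ', hmem, hψ, hψ'⟩ := (satList_iff M U a o o' s t).mp hsl
    have h1 := h _ ⟨(a, o, ψ, o', ψ'), ⟨hmem, rfl, rfl⟩, rfl⟩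
    dsimp only at h1
    rw [sat_imp] at h1
    have h2 := h1 hψ
    rw [Form.sat] at h2
    have h3 := h2 t hst
    rw [sat_imp] at h3
    have h4 := h3 hψ'
    rw [Form.sat] at h4
    exact h4

end AAUML
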